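/- arXiv:0710.0006 — 5 statements merged into one kernel-verified Lean document; each statement's English description precedes it below -/
import Mathlib

section
/- Suppose a T-periodic 2×2 linear system u' = A(t) u has monodromy matrix X(T) (with X(0) = I) whose eigenvalue +1 has algebraic multiplicity 2, and suppose ũ is a T-periodic solution with ũ₁(0) = 0 and ũ₂(0) ≠ 0. Then for the solution û with û₁(0) ≠ 0, û₂(0) = 0, one has û(t+T) = û(t) + (û₂(T)/ũ₂(0)) · ũ(t) for all t ∈ ℝ. -/
open Matrix NNReal

private lemma lipschitz_mulVec (M : Matrix (Fin 2) (Fin 2) ℝ) (K : ℝ≥0)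
    (hM : |M 0 0| + |M 0 1| + (|M 1 0| + |M 1 1|) ≤ (K : ℝ)) :
    LipschitzWith K (fun x : Fin 2 → ℝ => M.mulVec x) := by
  apply LipschitzWith.of_dist_le_mul
  intro x y
  rw [dist_eq_norm, dist_eq_norm, ← Matrix.mulVec_sub]
  set z := x - y
  have hz : ∀ j, ‖z j‖ ≤ ‖z‖ := fun j => norm_le_pi_norm z j
  rw [pi_norm_le_iff_of_nonneg (by positivity)]
  intro i
  have : M.mulVec z i = M i 0 * z 0 + M i 1 * z 1 := by
    simp [Matrix.mulVec, dotProduct, Fin.sum_univ_two]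
  rw [this]
  have h0 := hz 0
  have h1 := hz 1
  simp only [Real.norm_eq_abs] at *
  have hnn : (0:ℝ) ≤ ‖z‖ := norm_nonneg z
  have hrow : |M i 0| + |M i 1| ≤ (K : ℝ) := by
    have := abs_nonneg (M 0 0); have := abs_nonneg (M 0 1)
    have := abs_nonneg (M 1 0); have := abs_nonneg (M 1 1)
    have hi : i = 0 ∨ i = 1 := by omega
    rcases hi with rfl | rfl <;> linarith
  calc |M i 0 * z 0 + M i 1 * z 1| ≤ |M i 0 * z 0| + |M i 1 * z 1| := abs_add_le _ _
    _ = |M i 0| * |z 0| + |M i 1| * |z 1| := by rw [abs_mul, abs_mul]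
    _ ≤ |M i 0| * ‖z‖ + |M i 1| * ‖z‖ := by gcongr
    _ = (|M i 0| + |M i 1|) * ‖z‖ := by ring
    _ ≤ (K : ℝ) * ‖z‖ := mul_le_mul_of_nonneg_right hrow hnn

/-- Uniqueness of solutions to the linear ODE `x' = A t *ᵥ x`. -/
private lemma ode_uniq (A : ℝ → Matrix (Fin 2) (Fin 2) ℝ) (hA : Continuous A)
    (v w : ℝ → Fin 2 → ℝ)
    (hv : ∀ t, HasDerivAt v ((A t).mulVec (v t)) t)
    (hw : ∀ t, HasDerivAt w ((A t).mulVec (w t)) t)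
    (h0 : v 0 = w 0) : ∀ t, v t = w t := by
  intro t
  set a : ℝ := -(|t| + 1) with ha
  set b : ℝ := |t| + 1 with hb
  have habs : 0 ≤ |t| := abs_nonneg t
  have hab : a < b := by simp only [ha, hb]; linarith
  have h0mem : (0 : ℝ) ∈ Set.Ioo a b := by constructor <;> simp only [ha, hb] <;> linarith
  have htmem : t ∈ Set.Icc a b := by
    constructor <;> simp only [ha, hb] <;> [linarith [neg_abs_le t]; linarith [le_abs_self t]]
  -- clamp A to the interval [a, b]
  set B : ℝ → Matrix (Fin 2) (Fin 2) ℝ := fun s => A (min b (max a s)) with hB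
  have hclamp : ∀ s ∈ Set.Icc a b, B s = A s := by
    intro s hs
    simp only [hB]
    rw [max_eq_right hs.1, min_eq_right hs.2]
  -- norm function
  set N : ℝ → ℝ := fun s => |A s 0 0| + |A s 0 1| + (|A s 1 0| + |A s 1 1|) with hN
  have hNc : Continuous N := by
    have he : ∀ i j : Fin 2, Continuous fun s => |A s i j| := by
      intro i j
      exact ((continuous_apply j).comp ((continuous_apply i).comp hA)).abs
    exact (((he 0 0).add (he 0 1)).add ((he 1 0).add (he 1 1)))
  obtain ⟨s0, hs0mem, hs0⟩ := (isCompact_Icc (a := a) (b := b)).exists_isMaxOn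
    ⟨a, Set.left_mem_Icc.mpr hab.le⟩ hNc.continuousOn
  set K : ℝ≥0 := (N s0).toNNReal with hK
  have hKval : ∀ s, N (min b (max a s)) ≤ (K : ℝ) := by
    intro s
    have hmem : min b (max a s) ∈ Set.Icc a b := by
      constructor
      · exact le_min (hab.le) (le_max_left a s)
      · exact min_le_left _ _
    have h1 : N (min b (max a s)) ≤ N s0 := hs0 hmem
    have h2 : N s0 ≤ (K : ℝ) := by
      rw [hK]; exact (Real.le_coe_toNNReal _)
    linarith
  have hlip : ∀ s, LipschitzWith K (fun x : Fin 2 → ℝ => (B s).mulVec x) := by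
    intro s
    exact lipschitz_mulVec _ K (hKval s)
  have key : Set.EqOn v w (Set.Icc a b) := by
    apply ODE_solution_unique_of_mem_Icc (v := fun s x => (B s).mulVec x)
      (s := fun _ => Set.univ) (fun s _ => (hlip s).lipschitzOnWith) h0mem
    · exact fun s _ => (hv s).continuousAt.continuousWithinAt
    · intro s hs
      rw [hclamp s (Set.Ioo_subset_Icc_self hs)]
      exact hv s
    · exact fun _ _ => Set.mem_univ _
    · exact fun s _ => (hw s).continuousAt.continuousWithinAt
    · intro s hs
      rw [hclamp s (Set.Ioo_subset_Icc_self hs)]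
      exact hw s
    · exact fun _ _ => Set.mem_univ _
    · exact h0
  exact key htmem

/-- If the monodromy matrix of a `T`-periodic planar linear system has eigenvalue `+1`
of algebraic multiplicity 2, `ũ` is a `T`-periodic solution with `ũ₁(0) = 0`, `ũ₂(0) ≠ 0`,
and `û` is a solution with `û₁(0) ≠ 0`, `û₂(0) = 0`, then
`û(t+T) = û(t) + (û₂(T)/ũ₂(0)) ũ(t)` for all `t`. -/
theorem monodromy_multiplicity_two (T : ℝ) (hT : 0 < T)
    (A : ℝ → Matrix (Fin 2) (Fin 2) ℝ) (hA : Continuous A)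
    (hAper : ∀ t, A (t + T) = A t)
    (X : ℝ → Matrix (Fin 2) (Fin 2) ℝ)
    (hX : ∀ t, ∀ i j, HasDerivAt (fun s => X s i j) ((A t * X t) i j) t)
    (hX0 : X 0 = 1)
    (hchar : (X T).charpoly = (Polynomial.X - 1) ^ 2)
    (u hu_ : ℝ → Fin 2 → ℝ)
    (hu : ∀ t, HasDerivAt u ((A t).mulVec (u t)) t)
    (huper : ∀ t, u (t + T) = u t)
    (hu1 : u 0 0 = 0) (hu2 : u 0 1 ≠ 0)
    (hhu : ∀ t, HasDerivAt hu_ ((A t).mulVec (hu_ t)) t)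
    (hhu1 : hu_ 0 0 ≠ 0) (hhu2 : hu_ 0 1 = 0) :
    ∀ t, hu_ (t + T) = hu_ t + (hu_ T 1 / u 0 1) • u t := by
  -- `t ↦ X t *ᵥ c` is a solution with initial value `c`
  have hXsol : ∀ (c : Fin 2 → ℝ) (t : ℝ),
      HasDerivAt (fun s => (X s).mulVec c) ((A t).mulVec ((X t).mulVec c)) t := by
    intro c t
    rw [hasDerivAt_pi]
    intro i
    have h1 : HasDerivAt (fun s => X s i 0 * c 0 + X s i 1 * c 1)
        ((A t * X t) i 0 * c 0 + (A t * X t) i 1 * c 1) t :=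
      (((hX t i 0).mul_const (c 0)).add ((hX t i 1).mul_const (c 1)))
    have heq1 : (fun s => ((X s).mulVec c) i) = fun s => X s i 0 * c 0 + X s i 1 * c 1 := by
      funext s
      simp [Matrix.mulVec, dotProduct, Fin.sum_univ_two]
    have heq2 : ((A t).mulVec ((X t).mulVec c)) i
        = (A t * X t) i 0 * c 0 + (A t * X t) i 1 * c 1 := by
      simp [Matrix.mulVec, dotProduct, Matrix.mul_apply, Fin.sum_univ_two]
      ring
    rw [heq1, heq2]
    exact h1
  -- every solution equals `X t *ᵥ (initial value)`
  have hrep : ∀ (f : ℝ → Fin 2 → ℝ),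
      (∀ t, HasDerivAt f ((A t).mulVec (f t)) t) → ∀ t, f t = (X t).mulVec (f 0) := by
    intro f hf t
    have := ode_uniq A hA f (fun s => (X s).mulVec (f 0)) hf (hXsol (f 0))
      (by show f 0 = (X 0).mulVec (f 0); rw [hX0, Matrix.one_mulVec])
    exact this t
  -- periodicity of u gives structure of X T
  have huT : (X T).mulVec (u 0) = u 0 := by
    have h1 : u T = u 0 := by have := huper 0; rwa [zero_add] at this
    rw [← hrep u hu T, h1]
  have hXT01 : X T 0 1 = 0 := by
    have h0 := congrFun huT 0
    simp only [Matrix.mulVec, dotProduct, Fin.sum_univ_two, hu1, mul_zero,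
      zero_add] at h0
    exact (mul_eq_zero.mp h0).resolve_right hu2
  have hXT11 : X T 1 1 = 1 := by
    have h1 := congrFun huT 1
    simp only [Matrix.mulVec, dotProduct, Fin.sum_univ_two, hu1, mul_zero,
      zero_add] at h1
    have h2 : (X T 1 1 - 1) * u 0 1 = 0 := by ring_nf; linarith [h1]
    have := (mul_eq_zero.mp h2).resolve_right hu2
    linarith
  -- trace = 2 from the characteristic polynomial
  have htrace : X T 0 0 + X T 1 1 = 2 := by
    have h1 : Matrix.trace (X T) = -(X T).charpoly.coeff (Fintype.card (Fin 2) - 1) :=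
      Matrix.trace_eq_neg_charpoly_coeff (X T)
    rw [hchar] at h1
    have h2 : ((Polynomial.X - 1 : Polynomial ℝ) ^ 2)
        = Polynomial.X ^ 2 - 2 * Polynomial.X + 1 := by ring
    rw [h2] at h1
    simp [Polynomial.coeff_add, Polynomial.coeff_sub, Polynomial.coeff_X_pow,
      Polynomial.coeff_one, Matrix.trace_fin_two] at h1
    linarith
  have hXT00 : X T 0 0 = 1 := by linarith
  -- `w s = hu_(s+T)` is a solution
  set c : ℝ := hu_ T 1 / u 0 1 with hc
  set w : ℝ → Fin 2 → ℝ := fun s => hu_ (s + T) with hw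
  have hwsol : ∀ s, HasDerivAt w ((A s).mulVec (w s)) s := by
    intro s
    have h1 : HasDerivAt (fun r : ℝ => r + T) 1 s := (hasDerivAt_id s).add_const T
    have h2 := (hhu (s + T)).scomp s h1
    simp only [one_smul] at h2
    have : (A (s + T)).mulVec (hu_ (s + T)) = (A s).mulVec (w s) := by
      rw [hAper s]
    rw [← this]
    exact h2
  -- `g s = hu_ s + c • u s` is a solution
  set g : ℝ → Fin 2 → ℝ := fun s => hu_ s + c • u s with hg
  have hgsol : ∀ s, HasDerivAt g ((A s).mulVec (g s)) s := by
    intro s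
    have h1 := (hhu s).add ((hu s).const_smul c)
    have : (A s).mulVec (hu_ s) + c • (A s).mulVec (u s) = (A s).mulVec (g s) := by
      rw [hg]
      simp [Matrix.mulVec_add, Matrix.mulVec_smul]
    rw [← this]
    exact h1
  -- same initial values
  have hhuT : hu_ T = (X T).mulVec (hu_ 0) := hrep hu_ hhu T
  have hinit : w 0 = g 0 := by
    funext i
    have hT0 : hu_ T 0 = hu_ 0 0 := by
      rw [hhuT]
      simp [Matrix.mulVec, dotProduct, Fin.sum_univ_two, hXT00, hXT01, hhu2]
    fin_cases i
    · show hu_ (0 + T) 0 = hu_ 0 0 + c * u 0 0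
      rw [zero_add, hT0, hu1, mul_zero, add_zero]
    · show hu_ (0 + T) 1 = hu_ 0 1 + c * u 0 1
      rw [zero_add, hhu2, hc, zero_add, div_mul_cancel₀ _ hu2]
  -- uniqueness
  intro t
  exact ode_uniq A hA w g hwsol hgsol hinit t
end

section
/- Let x̃(t) = √(1-w)·(sin(wt), cos(wt)) with 0 < w < 1 and g(t, x) = (0, sin(wt)). Then the Melnikov-type function M_E(θ) = ∫₀^{2π/w} det[ x̃'(τ) , g(τ-θ, x̃(τ)) ] dτ equals -π√(1-w)·sin(wθ), and it has exactly two zeros θ₁ = 0 and θ₂ = π/w on [0, 2π/w). -/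
open Real

lemma melnikov_integral_aux (w θ : ℝ) (hw0 : 0 < w) :
    (∫ τ in (0:ℝ)..(2 * π / w), Real.cos (w * τ) * Real.sin (w * (τ - θ)))
      = -(π / w * Real.sin (w * θ)) := by
  have hwne : w ≠ 0 := ne_of_gt hw0
  have hderiv : ∀ τ ∈ Set.uIcc (0:ℝ) (2 * π / w),
      HasDerivAt (fun τ : ℝ => -(Real.cos (2 * w * τ - w * θ)) / (4 * w)
        - Real.sin (w * θ) * τ / 2)
        (Real.cos (w * τ) * Real.sin (w * (τ - θ))) τ := by
    intro τ _
    have h1 : HasDerivAt (fun τ : ℝ => 2 * w * τ - w * θ) (2 * w) τ := by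
      simpa using ((hasDerivAt_id τ).const_mul (2 * w)).sub_const (w * θ)
    have h2 : HasDerivAt (fun τ : ℝ => Real.cos (2 * w * τ - w * θ))
        (-Real.sin (2 * w * τ - w * θ) * (2 * w)) τ := (Real.hasDerivAt_cos _).comp τ h1
    have h3 : HasDerivAt (fun τ : ℝ => -(Real.cos (2 * w * τ - w * θ)) / (4 * w)
        - Real.sin (w * θ) * τ / 2)
        (-((-Real.sin (2 * w * τ - w * θ)) * (2 * w)) / (4 * w) - Real.sin (w * θ) / 2) τ :=
      (h2.neg.div_const (4 * w)).sub
        (by simpa [mul_div_assoc] using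
          ((hasDerivAt_id τ).const_mul (Real.sin (w * θ))).div_const 2)
    convert h3 using 1
    have key : Real.cos (w * τ) * Real.sin (w * (τ - θ)) =
        (Real.sin (2 * w * τ - w * θ) - Real.sin (w * θ)) / 2 := by
      have e1 : 2 * w * τ - w * θ = w * τ + (w * (τ - θ)) := by ring
      have e2 : w * θ = w * τ - (w * (τ - θ)) := by ring
      rw [e1, e2, Real.sin_add, Real.sin_sub]
      ring
    rw [key]
    field_simp
    ring
  have hcont : IntervalIntegrable (fun τ : ℝ => Real.cos (w * τ) * Real.sin (w * (τ - θ)))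
      MeasureTheory.volume 0 (2 * π / w) := by
    apply Continuous.intervalIntegrable
    continuity
  rw [intervalIntegral.integral_eq_sub_of_hasDerivAt hderiv hcont]
  have h4 : 2 * w * (2 * π / w) - w * θ = 4 * π - w * θ := by field_simp; ring
  have h5 : Real.cos (4 * π - w * θ) = Real.cos (w * θ) := by
    rw [show (4:ℝ) * π - w * θ = -(w * θ - 2 * π - 2 * π) by ring, Real.cos_neg,
      Real.cos_sub_two_pi, Real.cos_sub_two_pi]
  rw [h4, h5]
  simp only [mul_zero, sub_zero, zero_sub, zero_mul]
  rw [Real.cos_neg]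
  field_simp
  ring

/-- For `x̃(t) = √(1-w)(sin wt, cos wt)` and `g(t,x) = (0, sin wt)`, the Melnikov function
`M_E(θ) = ∫₀^{2π/w} det[x̃'(τ), g(τ-θ, x̃(τ))] dτ` equals `-π√(1-w) sin(wθ)` and has
exactly the two zeros `0` and `π/w` on `[0, 2π/w)`. -/
theorem melnikov_function_example (w : ℝ) (hw0 : 0 < w) (hw1 : w < 1) :
    (∀ θ : ℝ,
      (∫ τ in (0:ℝ)..(2 * π / w),
        ((w * Real.sqrt (1 - w) * Real.cos (w * τ)) * Real.sin (w * (τ - θ)) -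
          (-(w * Real.sqrt (1 - w)) * Real.sin (w * τ)) * 0))
        = -(π * Real.sqrt (1 - w) * Real.sin (w * θ))) ∧
    (∀ θ ∈ Set.Ico (0:ℝ) (2 * π / w),
      (-(π * Real.sqrt (1 - w) * Real.sin (w * θ)) = 0 ↔ θ = 0 ∨ θ = π / w)) := by
  have hwne : w ≠ 0 := ne_of_gt hw0
  have hs : (0:ℝ) < Real.sqrt (1 - w) := Real.sqrt_pos.mpr (by linarith)
  constructor
  · intro θ
    have heq : (∫ τ in (0:ℝ)..(2 * π / w),
        ((w * Real.sqrt (1 - w) * Real.cos (w * τ)) * Real.sin (w * (τ - θ)) -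
          (-(w * Real.sqrt (1 - w)) * Real.sin (w * τ)) * 0)) =
        (∫ τ in (0:ℝ)..(2 * π / w),
          (w * Real.sqrt (1 - w)) * (Real.cos (w * τ) * Real.sin (w * (τ - θ)))) := by
      congr 1
      funext τ
      ring
    rw [heq, intervalIntegral.integral_const_mul, melnikov_integral_aux w θ hw0]
    field_simp
  · intro θ ⟨hθ0, hθ2⟩
    have hπ : (0:ℝ) < π := Real.pi_pos
    constructor
    · intro h
      have hsin : Real.sin (w * θ) = 0 := by
        rcases mul_eq_zero.mp (neg_eq_zero.mp h) with h' | h'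
        · exact absurd (mul_eq_zero.mp h') (by push_neg; constructor <;> positivity)
        · exact h'
      obtain ⟨n, hn⟩ := Real.sin_eq_zero_iff.mp hsin
      have hθ : θ = n * π / w := by field_simp; linarith [hn]
      have hn0 : 0 ≤ (n:ℝ) := by
        by_contra hneg
        push_neg at hneg
        have : (n:ℝ) * π / w < 0 := by
          apply div_neg_of_neg_of_pos _ hw0
          exact mul_neg_of_neg_of_pos hneg hπ
        linarith [hθ ▸ hθ0]
      have hn2 : (n:ℝ) < 2 := by
        by_contra hge
        push_neg at hge
        have h2n : 2 * π ≤ (n:ℝ) * π := by nlinarith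
        have : 2 * π / w ≤ (n:ℝ) * π / w := by gcongr
        linarith [hθ ▸ hθ2]
      have hn0' : (0:ℤ) ≤ n := by exact_mod_cast hn0
      have hn2' : n < 2 := by exact_mod_cast hn2
      interval_cases n
      · left; rw [hθ]; norm_num
      · right; rw [hθ]; norm_num
    · rintro (rfl | rfl)
      · simp
      · rw [mul_div_cancel₀ _ hwne]
        simp
end

section
/- Let w ∈ (0,1), T = 2π/w, x̃(t) = √(1-w)(sin wt, cos wt), ŷ(t) = (1/(w√(1-w)))·(-2(1-w)t cos(wt) + sin(wt), 2(1-w)t sin(wt) + cos(wt)), and g(t,x) = (0, sin wt). Then M_A^s(0) := -∫_{s-T}^{s} det[ ŷ(τ), g(τ, x̃(τ)) ] dτ = (π/(w³√(1-w)))·(2(1-w) sin²(ws) - 1), and M_A^s(π/w) = -(π/(w³√(1-w)))·(2(1-w) sin²(ws) - 1). -/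
open Real

/-- For `ŷ(τ) = (1/(w√(1-w)))(-2(1-w)τ cos wτ + sin wτ, 2(1-w)τ sin wτ + cos wτ)`
and `g(t,x) = (0, sin wt)`:
`M_A^s(0) = -∫_{s-T}^s det[ŷ(τ), g(τ, x̃(τ))] dτ = (π/(w³√(1-w)))(2(1-w) sin²(ws) - 1)`
and `M_A^s(π/w)` equals the negative of that value, where `T = 2π/w`. -/
theorem MA_function_example (w : ℝ) (hw0 : 0 < w) (hw1 : w < 1) (s : ℝ) :
    (-(∫ τ in (s - 2 * π / w)..s,
        ((1 / (w * Real.sqrt (1 - w)) * (-(2 * (1 - w) * τ * Real.cos (w * τ)) + Real.sin (w * τ)))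
            * Real.sin (w * τ) -
          (1 / (w * Real.sqrt (1 - w)) * (2 * (1 - w) * τ * Real.sin (w * τ) + Real.cos (w * τ)))
            * 0))
      = π / (w ^ 3 * Real.sqrt (1 - w)) * (2 * (1 - w) * Real.sin (w * s) ^ 2 - 1)) ∧
    (-(∫ τ in (s - 2 * π / w)..s,
        ((1 / (w * Real.sqrt (1 - w)) * (-(2 * (1 - w) * τ * Real.cos (w * τ)) + Real.sin (w * τ)))
            * Real.sin (w * (τ - π / w)) -
          (1 / (w * Real.sqrt (1 - w)) * (2 * (1 - w) * τ * Real.sin (w * τ) + Real.cos (w * τ)))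
            * 0))
      = -(π / (w ^ 3 * Real.sqrt (1 - w)) * (2 * (1 - w) * Real.sin (w * s) ^ 2 - 1))) := by
  have hw : w ≠ 0 := ne_of_gt hw0
  have hq : Real.sqrt (1 - w) ≠ 0 := by
    have : 0 < 1 - w := by linarith
    positivity
  set f : ℝ → ℝ := fun τ =>
    (1 / (w * Real.sqrt (1 - w)) * (-(2 * (1 - w) * τ * Real.cos (w * τ)) + Real.sin (w * τ)))
      * Real.sin (w * τ) -
    (1 / (w * Real.sqrt (1 - w)) * (2 * (1 - w) * τ * Real.sin (w * τ) + Real.cos (w * τ))) * 0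
    with hf
  set F : ℝ → ℝ := fun τ =>
    1 / (w * Real.sqrt (1 - w)) *
      ((1 - w) / (2 * w) * (τ * Real.cos (2 * (w * τ)))
        - (1 - w) / (4 * w ^ 2) * Real.sin (2 * (w * τ))
        + τ / 2 - 1 / (4 * w) * Real.sin (2 * (w * τ))) with hF
  have hd : ∀ τ : ℝ, HasDerivAt F (f τ) τ := by
    intro τ
    have hlin : HasDerivAt (fun x : ℝ => 2 * (w * x)) (2 * w) τ := by
      simpa using (((hasDerivAt_id τ).const_mul w).const_mul 2)
    have hc : HasDerivAt (fun x : ℝ => Real.cos (2 * (w * x)))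
        (-Real.sin (2 * (w * τ)) * (2 * w)) τ := by
      exact (Real.hasDerivAt_cos (2 * (w * τ))).comp τ hlin
    have hs : HasDerivAt (fun x : ℝ => Real.sin (2 * (w * x)))
        (Real.cos (2 * (w * τ)) * (2 * w)) τ := by
      exact (Real.hasDerivAt_sin (2 * (w * τ))).comp τ hlin
    have htc : HasDerivAt (fun x : ℝ => x * Real.cos (2 * (w * x)))
        (1 * Real.cos (2 * (w * τ)) + τ * (-Real.sin (2 * (w * τ)) * (2 * w))) τ :=
      (hasDerivAt_id τ).mul hc
    have hbig := ((((htc.const_mul ((1 - w) / (2 * w))).sub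
        (hs.const_mul ((1 - w) / (4 * w ^ 2)))).add
        ((hasDerivAt_id τ).div_const 2)).sub
        (hs.const_mul (1 / (4 * w)))).const_mul (1 / (w * Real.sqrt (1 - w)))
    convert hbig using 1
    case e'_4 => rfl
    case e'_5 => rfl
    case e'_8 => rfl
    rw [hf]
    simp only
    rw [Real.sin_two_mul, Real.cos_two_mul, Real.cos_sq']
    field_simp
    ring
  have hcont : Continuous f := by
    rw [hf]; fun_prop
  have hint : (∫ τ in (s - 2 * π / w)..s, f τ) = F s - F (s - 2 * π / w) :=
    intervalIntegral.integral_eq_sub_of_hasDerivAt (fun τ _ => hd τ)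
      (hcont.intervalIntegrable _ _)
  have harg : 2 * (w * (s - 2 * π / w)) = (2 * (w * s) - 2 * π) - 2 * π := by
    field_simp; ring
  have ec : Real.cos (2 * (w * (s - 2 * π / w))) = Real.cos (2 * (w * s)) := by
    rw [harg, Real.cos_sub_two_pi, Real.cos_sub_two_pi]
  have es : Real.sin (2 * (w * (s - 2 * π / w))) = Real.sin (2 * (w * s)) := by
    rw [harg, Real.sin_sub_two_pi, Real.sin_sub_two_pi]
  have hπ : π ≠ 0 := Real.pi_ne_zero
  have key : -(∫ τ in (s - 2 * π / w)..s, f τ)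
      = π / (w ^ 3 * Real.sqrt (1 - w)) * (2 * (1 - w) * Real.sin (w * s) ^ 2 - 1) := by
    rw [hint, hF]
    simp only [ec, es]
    rw [Real.cos_two_mul, Real.cos_sq']
    field_simp
    ring
  refine ⟨key, ?_⟩
  have h2 : (∫ τ in (s - 2 * π / w)..s,
        ((1 / (w * Real.sqrt (1 - w)) * (-(2 * (1 - w) * τ * Real.cos (w * τ)) + Real.sin (w * τ)))
            * Real.sin (w * (τ - π / w)) -
          (1 / (w * Real.sqrt (1 - w)) * (2 * (1 - w) * τ * Real.sin (w * τ) + Real.cos (w * τ)))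
            * 0))
      = ∫ τ in (s - 2 * π / w)..s, -(f τ) := by
    apply intervalIntegral.integral_congr
    intro τ _
    rw [hf]
    simp only
    rw [show w * (τ - π / w) = w * τ - π by field_simp, Real.sin_sub_pi]
    ring
  rw [h2, intervalIntegral.integral_neg, neg_neg, ← key, neg_neg]
end

section
/- Let x̃(t) = (sin(4t/5), cos(4t/5)) and g(t,x) = ((sin(4t/5) - x₁)³ + x₁) in the second component (i.e. g(t,x) = (0, (sin(4t/5)-x₁)³ + x₁)). Then the Melnikov function M_E(θ) = ∫₀^{5π/2} det[ x̃'(τ), g(τ-θ, x̃(τ)) ] dτ equals (3π/4) sin(8θ/5) - (3π/2) sin(4θ/5), its only zeros on [0, 5π/2) are θ₁ = 0 and θ₂ = 5π/4, and θ₁ = 0 is a zero of exact order 3: M_E'(0) = 0, M_E''(0) = 0, M_E'''(0) = -288π/125 ≠ 0. -/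
open Real

/-- The Melnikov function of Example 2:
`M_E(θ) = ∫₀^{5π/2} det[x̃'(τ), g(τ-θ, x̃(τ))] dτ` for
`x̃(t) = (sin(4t/5), cos(4t/5))`, `g(t,x) = (0, (sin(4t/5) - x₁)³ + x₁)`. -/
noncomputable def MeEx2 (θ : ℝ) : ℝ :=
  ∫ τ in (0:ℝ)..(5 * π / 2),
    ((4 / 5 * Real.cos (4 * τ / 5)) *
        ((Real.sin (4 * (τ - θ) / 5) - Real.sin (4 * τ / 5)) ^ 3 + Real.sin (4 * τ / 5)) -
      (-(4 / 5) * Real.sin (4 * τ / 5)) * 0)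


lemma hcosL (a c τ : ℝ) : HasDerivAt (fun s : ℝ => Real.cos (a*s/5 - c)) (-(a/5) * Real.sin (a*τ/5 - c)) τ := by
  have h : HasDerivAt (fun s : ℝ => a*s/5 - c) (a/5) τ := by
    simpa using (((hasDerivAt_id τ).const_mul a).div_const 5).sub_const c
  have := (Real.hasDerivAt_cos (a*τ/5 - c)).comp τ h
  exact this.congr_deriv (by ring)

noncomputable def Fp (θ t : ℝ) : ℝ :=
  (-(1/32)) * Real.cos (16*t/5 - 0)
  + (1/32) * Real.cos (16*t/5 - 12*θ/5)
  + (-(3/32)) * Real.cos (16*t/5 - 8*θ/5)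
  + (3/32) * Real.cos (16*t/5 - 4*θ/5)
  + (1/4) * Real.cos (8*t/5 - 0)
  + (1/16) * Real.cos (8*t/5 - 12*θ/5)
  + (-(3/8)) * Real.cos (8*t/5 - 4*θ/5)
  + (-(3/16)) * Real.cos (8*t/5 - -(4*θ/5))
  + (-(3/5) * Real.sin (4*θ/5) + 3/5 * Real.sin (4*θ/5) * Real.cos (4*θ/5)) * t

lemma hFp (θ τ : ℝ) : HasDerivAt (Fp θ)
    ((4 / 5 * Real.cos (4 * τ / 5)) *
        ((Real.sin (4 * (τ - θ) / 5) - Real.sin (4 * τ / 5)) ^ 3 + Real.sin (4 * τ / 5)) -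
      (-(4 / 5) * Real.sin (4 * τ / 5)) * 0) τ := by
  have H : HasDerivAt (Fp θ)
      ( (-(1/32)) * (-(16/5) * Real.sin (16*τ/5 - 0))
      + (1/32) * (-(16/5) * Real.sin (16*τ/5 - 12*θ/5))
      + (-(3/32)) * (-(16/5) * Real.sin (16*τ/5 - 8*θ/5))
      + (3/32) * (-(16/5) * Real.sin (16*τ/5 - 4*θ/5))
      + (1/4) * (-(8/5) * Real.sin (8*τ/5 - 0))
      + (1/16) * (-(8/5) * Real.sin (8*τ/5 - 12*θ/5))
      + (-(3/8)) * (-(8/5) * Real.sin (8*τ/5 - 4*θ/5))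
      + (-(3/16)) * (-(8/5) * Real.sin (8*τ/5 - -(4*θ/5)))
      + (-(3/5) * Real.sin (4*θ/5) + 3/5 * Real.sin (4*θ/5) * Real.cos (4*θ/5)) * 1) τ := by
    exact ((((((((((hcosL 16 0 τ).const_mul (-(1/32))).add
      ((hcosL 16 (12*θ/5) τ).const_mul (1/32))).add
      ((hcosL 16 (8*θ/5) τ).const_mul (-(3/32)))).add
      ((hcosL 16 (4*θ/5) τ).const_mul (3/32))).add
      ((hcosL 8 0 τ).const_mul (1/4))).add
      ((hcosL 8 (12*θ/5) τ).const_mul (1/16))).add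
      ((hcosL 8 (4*θ/5) τ).const_mul (-(3/8)))).add
      ((hcosL 8 (-(4*θ/5)) τ).const_mul (-(3/16)))).add
      ((hasDerivAt_id τ).const_mul (-(3/5) * Real.sin (4*θ/5) + 3/5 * Real.sin (4*θ/5) * Real.cos (4*θ/5))))
  convert H using 1
  rw [show (16*τ/5 - 0 : ℝ) = ((4*τ/5 + 4*τ/5) + (4*τ/5 + 4*τ/5)) by ring,
      show (16*τ/5 - 12*θ/5 : ℝ) = ((4*τ/5 + 4*τ/5) + (4*τ/5 + 4*τ/5)) - ((4*θ/5 + 4*θ/5) + 4*θ/5) by ring,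
      show (16*τ/5 - 8*θ/5 : ℝ) = ((4*τ/5 + 4*τ/5) + (4*τ/5 + 4*τ/5)) - (4*θ/5 + 4*θ/5) by ring,
      show (16*τ/5 - 4*θ/5 : ℝ) = ((4*τ/5 + 4*τ/5) + (4*τ/5 + 4*τ/5)) - 4*θ/5 by ring,
      show (8*τ/5 - 0 : ℝ) = (4*τ/5 + 4*τ/5) by ring,
      show (8*τ/5 - 12*θ/5 : ℝ) = (4*τ/5 + 4*τ/5) - ((4*θ/5 + 4*θ/5) + 4*θ/5) by ring,
      show (8*τ/5 - 4*θ/5 : ℝ) = (4*τ/5 + 4*τ/5) - 4*θ/5 by ring,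
      show (8*τ/5 - -(4*θ/5) : ℝ) = (4*τ/5 + 4*τ/5) + 4*θ/5 by ring,
      show (4*(τ-θ)/5 : ℝ) = 4*τ/5 - 4*θ/5 by ring]
  simp only [Real.sin_add, Real.cos_add, Real.sin_sub, Real.cos_sub]
  linear_combination
    ((3/5:ℝ) * Real.sin (4*θ/5) * Real.cos (4*θ/5) + (-3/5:ℝ) * Real.sin (4*θ/5) * Real.cos (4*θ/5)^2 + (-3/5:ℝ) * Real.sin (4*θ/5)^3 + (-3/10:ℝ) * Real.cos (4*τ/5)^2 * Real.sin (4*θ/5) + (3/5:ℝ) * Real.cos (4*τ/5)^2 * Real.sin (4*θ/5) * Real.cos (4*θ/5) + (-3/10:ℝ) * Real.cos (4*τ/5)^2 * Real.sin (4*θ/5) * Real.cos (4*θ/5)^2 + (-7/10:ℝ) * Real.cos (4*τ/5)^2 * Real.sin (4*θ/5)^3 + (-2/5:ℝ) * Real.sin (4*τ/5) * Real.cos (4*τ/5) + (6/5:ℝ) * Real.sin (4*τ/5) * Real.cos (4*τ/5) * Real.cos (4*θ/5) + (-6/5:ℝ) * Real.sin (4*τ/5) * Real.cos (4*τ/5)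 * Real.cos (4*θ/5)^2 + (2/5:ℝ) * Real.sin (4*τ/5) * Real.cos (4*τ/5) * Real.cos (4*θ/5)^3 + (-6/5:ℝ) * Real.sin (4*τ/5) * Real.cos (4*τ/5) * Real.sin (4*θ/5)^2 + (6/5:ℝ) * Real.sin (4*τ/5) * Real.cos (4*τ/5) * Real.sin (4*θ/5)^2 * Real.cos (4*θ/5) + (-3/10:ℝ) * Real.sin (4*τ/5)^2 * Real.sin (4*θ/5) + (3/5:ℝ) * Real.sin (4*τ/5)^2 * Real.sin (4*θ/5) * Real.cos (4*θ/5) + (-3/10:ℝ) * Real.sin (4*τ/5)^2 * Real.sin (4*θ/5) * Real.cos (4*θ/5)^2 + (1/10:ℝ) * Real.sin (4*τ/5)^2 * Real.sin (4*θ/5)^3)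
      * Real.sin_sq_add_cos_sq (4*τ/5)
    + ((-3/5:ℝ) * Real.sin (4*θ/5) + (-6/5:ℝ) * Real.sin (4*τ/5) * Real.cos (4*τ/5) + (3/5:ℝ) * Real.sin (4*τ/5) * Real.cos (4*τ/5) * Real.cos (4*θ/5) + (3/5:ℝ) * Real.sin (4*τ/5)^2 * Real.sin (4*θ/5))
      * Real.sin_sq_add_cos_sq (4*θ/5)

lemma endT (c : ℝ) : Real.cos (16*(5 * π / 2)/5 - c) = Real.cos c ∧
    Real.cos (8*(5 * π / 2)/5 - c) = Real.cos c ∧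
    Real.cos (16*(0:ℝ)/5 - c) = Real.cos c ∧
    Real.cos (8*(0:ℝ)/5 - c) = Real.cos c := by
  have h2 : ∀ x : ℝ, Real.cos (2*π + x) = Real.cos x := by
    intro x
    rw [Real.cos_add, Real.cos_two_pi, Real.sin_two_pi]; ring
  refine ⟨?_, ?_, ?_, ?_⟩
  · rw [show (16*(5 * π / 2)/5 - c : ℝ) = 2*π + (2*π + (2*π + (2*π + -c))) by ring,
        h2, h2, h2, h2, Real.cos_neg]
  · rw [show (8*(5 * π / 2)/5 - c : ℝ) = 2*π + (2*π + -c) by ring, h2, h2, Real.cos_neg]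
  · rw [show (16*(0:ℝ)/5 - c : ℝ) = -c by ring, Real.cos_neg]
  · rw [show (8*(0:ℝ)/5 - c : ℝ) = -c by ring, Real.cos_neg]

lemma MeEx2_eq (θ : ℝ) :
    MeEx2 θ = 3 * π / 4 * Real.sin (8 * θ / 5) - 3 * π / 2 * Real.sin (4 * θ / 5) := by
  have hint : IntervalIntegrable (fun τ : ℝ =>
      ((4 / 5 * Real.cos (4 * τ / 5)) *
        ((Real.sin (4 * (τ - θ) / 5) - Real.sin (4 * τ / 5)) ^ 3 + Real.sin (4 * τ / 5)) -
      (-(4 / 5) * Real.sin (4 * τ / 5)) * 0)) MeasureTheory.volume 0 (5 * π / 2) := by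
    apply Continuous.intervalIntegrable
    fun_prop
  have key : MeEx2 θ = Fp θ (5 * π / 2) - Fp θ 0 :=
    intervalIntegral.integral_eq_sub_of_hasDerivAt (fun τ _ => hFp θ τ) hint
  rw [key]
  simp only [Fp, (endT _).1, (endT _).2.1, (endT _).2.2.1, (endT _).2.2.2]
  rw [show (8 * θ / 5 : ℝ) = 4*θ/5 + 4*θ/5 by ring, Real.sin_add]
  ring

lemma hsinL (a τ : ℝ) : HasDerivAt (fun s : ℝ => Real.sin (a * s / 5)) (a/5 * Real.cos (a * τ / 5)) τ := by
  have h : HasDerivAt (fun s : ℝ => a*s/5) (a/5) τ := by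
    simpa using ((hasDerivAt_id τ).const_mul a).div_const 5
  have := (Real.hasDerivAt_sin (a*τ/5)).comp τ h
  exact this.congr_deriv (by ring)

lemma hcosL2 (a τ : ℝ) : HasDerivAt (fun s : ℝ => Real.cos (a * s / 5)) (-(a/5) * Real.sin (a * τ / 5)) τ := by
  have h : HasDerivAt (fun s : ℝ => a*s/5) (a/5) τ := by
    simpa using ((hasDerivAt_id τ).const_mul a).div_const 5
  have := (Real.hasDerivAt_cos (a*τ/5)).comp τ h
  exact this.congr_deriv (by ring)

/-- `M_E(θ) = (3π/4) sin(8θ/5) - (3π/2) sin(4θ/5)`, its only zeros on `[0, 5π/2)` are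
`0` and `5π/4`, and `0` is a zero of exact order 3:
`M_E'(0) = 0`, `M_E''(0) = 0`, `M_E'''(0) = -288π/125 ≠ 0`. -/
theorem melnikov_cubic_zero_example :
    (∀ θ : ℝ, MeEx2 θ = 3 * π / 4 * Real.sin (8 * θ / 5) - 3 * π / 2 * Real.sin (4 * θ / 5)) ∧
    (∀ θ ∈ Set.Ico (0:ℝ) (5 * π / 2), (MeEx2 θ = 0 ↔ θ = 0 ∨ θ = 5 * π / 4)) ∧
    deriv MeEx2 0 = 0 ∧
    deriv (deriv MeEx2) 0 = 0 ∧
    deriv (deriv (deriv MeEx2)) 0 = -(288 * π / 125) ∧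
    -(288 * π / 125) ≠ (0:ℝ) := by
  have hπ := Real.pi_pos
  have hMfun : MeEx2 = fun θ => 3 * π / 4 * Real.sin (8 * θ / 5) - 3 * π / 2 * Real.sin (4 * θ / 5) :=
    funext MeEx2_eq
  have hd1 : deriv MeEx2 = fun θ => 3 * π / 4 * (8/5 * Real.cos (8 * θ / 5)) - 3 * π / 2 * (4/5 * Real.cos (4 * θ / 5)) := by
    rw [hMfun]
    funext θ
    exact (((hsinL 8 θ).const_mul (3 * π / 4)).sub ((hsinL 4 θ).const_mul (3 * π / 2))).deriv
  have hd2 : deriv (deriv MeEx2) = fun θ => -(48*π/25) * Real.sin (8 * θ / 5) + 24*π/25 * Real.sin (4 * θ / 5) := by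
    rw [hd1]
    funext θ
    have H := ((((hcosL2 8 θ).const_mul (8/5:ℝ)).const_mul (3 * π / 4)).sub
      (((hcosL2 4 θ).const_mul (4/5:ℝ)).const_mul (3 * π / 2)))
    exact H.deriv.trans (by ring)
  have hd3 : deriv (deriv (deriv MeEx2)) 0 = -(288 * π / 125) := by
    rw [hd2]
    have H := (((hsinL 8 0).const_mul (-(48*π/25))).add ((hsinL 4 0).const_mul (24*π/25)))
    refine H.deriv.trans ?_
    rw [show (8 * (0:ℝ) / 5) = 0 by ring, show (4 * (0:ℝ) / 5) = 0 by ring, Real.cos_zero]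
    ring
  refine ⟨MeEx2_eq, ?_, ?_, ?_, hd3, by nlinarith⟩
  · rintro θ ⟨h0, hT⟩
    constructor
    · intro h
      rw [MeEx2_eq θ, show (8 * θ / 5 : ℝ) = 4*θ/5 + 4*θ/5 by ring, Real.sin_add] at h
      have hfac : Real.sin (4*θ/5) * (Real.cos (4*θ/5) - 1) = 0 := by
        have h32 : (3 * π / 2 : ℝ) ≠ 0 := by positivity
        apply (mul_eq_zero.mp (show (3 * π / 2 : ℝ) * (Real.sin (4*θ/5) * (Real.cos (4*θ/5) - 1)) = 0 by
          linear_combination h)).resolve_left h32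
      have hs : Real.sin (4*θ/5) = 0 := by
        rcases mul_eq_zero.mp hfac with h' | h'
        · exact h'
        · have hc : Real.cos (4*θ/5) = 1 := by linarith
          have := Real.sin_sq_add_cos_sq (4*θ/5)
          have hsq : Real.sin (4*θ/5) ^ 2 = 0 := by rw [hc] at this; linarith
          exact pow_eq_zero_iff two_ne_zero |>.mp hsq
      obtain ⟨n, hn⟩ := Real.sin_eq_zero_iff.mp hs
      have hn0 : (0:ℝ) ≤ (n:ℝ) := by
        by_contra hcon
        push_neg at hcon
        nlinarith
      have hn2 : (n:ℝ) < 2 := by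
        by_contra hcon
        push_neg at hcon
        nlinarith
      have hn0' : (0:ℤ) ≤ n := by exact_mod_cast hn0
      have hn2' : (n:ℤ) < 2 := by exact_mod_cast hn2
      interval_cases n
      · left
        simp at hn
        linarith
      · right
        simp at hn
        linarith
    · rintro (rfl | rfl)
      · rw [MeEx2_eq]
        norm_num
      · rw [MeEx2_eq, show (8 * (5 * π / 4) / 5 : ℝ) = 2*π by ring,
            show (4 * (5 * π / 4) / 5 : ℝ) = π by ring, Real.sin_two_pi, Real.sin_pi]
        ring
  · rw [hd1]
    norm_num
    ring
  · rw [hd2]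
    norm_num
end

section
/- Suppose a family of periodic orbits x(t, α) of the planar C¹ system x' = f(x) depends C¹ on α, with periods T(α) and initial conditions x(0, α) = (0, J(α)). If at α₀ one has T'(α₀) = 0, J'(α₀) ≠ 0, and the first component of x'_t(0, α₀) is nonzero, then every solution of the variational system y' = f'(x(t, α₀)) y is T(α₀)-periodic. -/
open Matrix

/-- If a family of periodic orbits `x(·,α)` of `x' = f(x)` with periods `T(α)` and
initial conditions `x(0,α) = (0, J(α))` satisfies `T'(α₀) = 0`, `J'(α₀) ≠ 0` and
the first component of `x'_t(0,α₀) = f(x(0,α₀))` is nonzero, then every solution of the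
variational system `y' = f'(x(t,α₀)) y` is `T(α₀)`-periodic. -/
theorem critical_period_degenerate_cycle
    (f : (Fin 2 → ℝ) → Fin 2 → ℝ) (hf : ContDiff ℝ 1 f)
    (f' : (Fin 2 → ℝ) → Matrix (Fin 2) (Fin 2) ℝ)
    (hf' : ∀ ξ, HasFDerivAt f (LinearMap.toContinuousLinearMap (f' ξ).mulVecLin) ξ)
    (x : ℝ → ℝ → Fin 2 → ℝ)
    (hxC1 : ContDiff ℝ 1 fun p : ℝ × ℝ => x p.1 p.2)
    (T J : ℝ → ℝ) (α₀ : ℝ)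
    (hsol : ∀ t α, HasDerivAt (fun s => x s α) (f (x t α)) t)
    (hper : ∀ t α, x (t + T α) α = x t α)
    (hinit : ∀ α, x 0 α = ![0, J α])
    (hT : HasDerivAt T 0 α₀)
    (j : ℝ) (hJ : HasDerivAt J j α₀) (hj : j ≠ 0)
    (hfirst : f (x 0 α₀) 0 ≠ 0) :
    ∀ y : ℝ → Fin 2 → ℝ,
      (∀ t, HasDerivAt y ((f' (x t α₀)).mulVec (y t)) t) →
      ∀ t, y (t + T α₀) = y t := by
  intro y hy
  -- notation
  set τ := T α₀ with hτdef
  have hDf : ∀ ξ (z : Fin 2 → ℝ), (f' ξ).mulVec z = fderiv ℝ f ξ z := by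
    intro ξ z; rw [(hf' ξ).fderiv]; rfl
  set F : ℝ × ℝ → Fin 2 → ℝ := fun p => x p.1 p.2 with hFdef
  have hFd : Differentiable ℝ F := hxC1.differentiable one_ne_zero
  have hFc : Continuous fun p => fderiv ℝ F p := hxC1.continuous_fderiv one_ne_zero
  set X : ℝ → Fin 2 → ℝ := fun t => x t α₀ with hXdef
  have hXc : Continuous X :=
    hxC1.continuous.comp (continuous_id.prodMk continuous_const)
  set v : ℝ → Fin 2 → ℝ := fun t => f (X t) with hvdef
  set w : ℝ → Fin 2 → ℝ := fun t => fderiv ℝ F (t, α₀) ((0 : ℝ), (1 : ℝ)) with hwdef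
  -- the partial derivative in α
  have hwd : ∀ t α, HasDerivAt (fun α => x t α) (fderiv ℝ F (t, α) ((0:ℝ), (1:ℝ))) α := by
    intro t α
    have h1 : HasDerivAt (fun α : ℝ => ((t : ℝ), α)) (((0:ℝ), (1:ℝ))) α :=
      (hasDerivAt_const _ _).prodMk (hasDerivAt_id _)
    exact (hFd (t, α)).hasFDerivAt.comp_hasDerivAt α h1
  -- continuity of w (jointly in both variables)
  set W : ℝ × ℝ → Fin 2 → ℝ := fun p => fderiv ℝ F p ((0:ℝ), (1:ℝ)) with hWdef
  have hWc : Continuous W := hFc.clm_apply continuous_const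
  have hwc : Continuous w := hWc.comp (continuous_id.prodMk continuous_const)
  -- v is a solution of the variational equation
  have hv' : ∀ t, HasDerivAt v ((f' (X t)).mulVec (v t)) t := by
    intro t
    exact (hf' (X t)).comp_hasDerivAt t (hsol t α₀)
  -- v is τ-periodic
  have hvper : ∀ t, v (t + τ) = v t := by
    intro t; simp only [hvdef, hXdef, hτdef, hper t α₀]
  -- w is τ-periodic
  have hwper : ∀ t, w (t + τ) = w t := by
    intro t
    have hL : HasDerivAt (fun α => x (t + T α) α) (w (t + τ)) α₀ := by
      have hg : HasDerivAt (fun α : ℝ => (t + T α, α)) (((0:ℝ), (1:ℝ))) α₀ := by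
        have : HasDerivAt (fun α : ℝ => t + T α) 0 α₀ := by
          have h := (hasDerivAt_const α₀ t).add hT; rw [zero_add] at h; exact h
        exact this.prodMk (hasDerivAt_id α₀)
      have h2 := (hFd _).hasFDerivAt.comp_hasDerivAt α₀ hg
      exact h2
    have hR : HasDerivAt (fun α => x (t + T α) α) (w t) α₀ := by
      have : (fun α => x (t + T α) α) = fun α => x t α := funext fun α => hper t α
      rw [this]; exact hwd t α₀
    exact hL.unique hR
  -- w at 0
  have hw0 : w 0 = ![0, j] := by
    have hL : HasDerivAt (fun α => x 0 α) (w 0) α₀ := hwd 0 α₀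
    have hR : HasDerivAt (fun α => x 0 α) (![0, j]) α₀ := by
      have : (fun α => x 0 α) = fun α => ![0, J α] := funext hinit
      rw [this]
      rw [hasDerivAt_pi]
      intro i
      fin_cases i
      · simpa using hasDerivAt_const α₀ (0:ℝ)
      · simpa using hJ
    exact hL.unique hR
  -- w is a solution of the variational equation
  have hw' : ∀ t, HasDerivAt w ((f' (X t)).mulVec (w t)) t := by
    set G : ℝ × ℝ → Fin 2 → ℝ := fun p => fderiv ℝ f (x p.1 p.2) (W p) with hGdef
    have hGc : Continuous G :=
      ((hf.continuous_fderiv one_ne_zero).comp hxC1.continuous).clm_apply hWc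
    set g : ℝ → Fin 2 → ℝ := fun s => G (s, α₀) with hgdef
    have hgc : Continuous g := hGc.comp (continuous_id.prodMk continuous_const)
    have hgw : ∀ s, g s = (f' (X s)).mulVec (w s) := fun s => (hDf (X s) (w s)).symm
    -- the integral equation for w
    have hint : ∀ t, w t = w 0 + ∫ s in (0:ℝ)..t, g s := by
      intro t
      have hxsc : ∀ α, Continuous fun s => f (x s α) := by
        intro α
        exact hf.continuous.comp (hxC1.continuous.comp (continuous_id.prodMk continuous_const))
      have hfun : ∀ α, x t α - x 0 α = ∫ s in (0:ℝ)..t, f (x s α) := by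
        intro α
        exact (intervalIntegral.integral_eq_sub_of_hasDerivAt (fun s _ => hsol s α)
          ((hxsc α).intervalIntegrable 0 t)).symm
      obtain ⟨C, hC⟩ := (((isCompact_uIcc (a := (0:ℝ)) (b := t))).prod
        (isCompact_closedBall α₀ 1)).exists_bound_of_continuousOn hGc.continuousOn
      have hder := intervalIntegral.hasDerivAt_integral_of_dominated_loc_of_deriv_le
        (F := fun α s => f (x s α)) (F' := fun α s => G (s, α)) (x₀ := α₀)
        (a := (0:ℝ)) (b := t) (bound := fun _ => C) (μ := MeasureTheory.volume)
        (Metric.ball_mem_nhds α₀ one_pos)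
        (Filter.Eventually.of_forall fun α => (hxsc α).aestronglyMeasurable)
        ((hxsc α₀).intervalIntegrable 0 t)
        hgc.aestronglyMeasurable
        (Filter.Eventually.of_forall fun s hs α hα =>
          hC (s, α) ⟨Set.uIoc_subset_uIcc hs, Metric.ball_subset_closedBall hα⟩)
        (intervalIntegrable_const)
        (Filter.Eventually.of_forall fun s _ α _ => by
          have h := (hf' (x s α)).comp_hasDerivAt α (hwd s α)
          show HasDerivAt (fun α => f (x s α)) (fderiv ℝ f (x s α) (W (s, α))) α
          rw [(hf' (x s α)).fderiv]
          exact h)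
      have hL : HasDerivAt (fun α => x t α - x 0 α) (w t - w 0) α₀ :=
        (hwd t α₀).sub (hwd 0 α₀)
      have hfe : (fun α => x t α - x 0 α) = fun α => ∫ s in (0:ℝ)..t, f (x s α) :=
        funext hfun
      rw [hfe] at hL
      have hkey := hL.unique hder.2
      rw [sub_eq_iff_eq_add'] at hkey
      exact hkey
    intro t
    have hFTC : HasDerivAt (fun u => ∫ s in (0:ℝ)..u, g s) (g t) t :=
      intervalIntegral.integral_hasDerivAt_right (hgc.intervalIntegrable _ _)
        (hgc.stronglyMeasurable.stronglyMeasurableAtFilter) hgc.continuousAt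
    have hwfun : w = fun u => w 0 + ∫ s in (0:ℝ)..u, g s := funext hint
    rw [← hgw t, hwfun]
    have h := (hasDerivAt_const t (w 0)).add hFTC; rw [zero_add] at h; exact h
  -- the given solution equals a combination of v and w
  set p := f (X 0) 0 with hpdef
  set q := f (X 0) 1 with hqdef
  set a := y 0 0 / p with hadef
  set b := (y 0 1 - a * q) / j with hbdef
  set z : ℝ → Fin 2 → ℝ := fun t => a • v t + b • w t with hzdef
  have hz0 : z 0 = y 0 := by
    funext i
    have hv0 : v 0 = f (x 0 α₀) := rfl
    fin_cases i
    · show a * v 0 0 + b * w 0 0 = y 0 0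
      rw [hw0]
      show a * p + b * 0 = y 0 0
      rw [hadef, mul_zero, add_zero, div_mul_cancel₀ _ hfirst]
    · show a * v 0 1 + b * w 0 1 = y 0 1
      rw [hw0, hbdef]
      show a * q + (y 0 1 - a * q) / j * j = y 0 1
      rw [div_mul_cancel₀ _ hj]; ring
  have hz' : ∀ t, HasDerivAt z ((f' (X t)).mulVec (z t)) t := by
    intro t
    have := ((hv' t).const_smul a).add ((hw' t).const_smul b)
    convert this using 1
    · rfl
    · rfl
    · rfl
    · rfl
    simp only [hzdef, hDf, map_add, ContinuousLinearMap.map_smul]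
  have hyz : ∀ t, y t = z t := by
    intro t₁
    set a' := min 0 t₁ - 1 with ha'
    set b' := max 0 t₁ + 1 with hb'
    have hab : a' < b' := by
      have h1 : min 0 t₁ ≤ max 0 t₁ := le_trans (min_le_left _ _) (le_max_left _ _)
      simp only [ha', hb']; linarith
    set π : ℝ → ℝ := fun s => max a' (min b' s) with hπ
    have hπmem : ∀ s, π s ∈ Set.Icc a' b' :=
      fun s => ⟨le_max_left _ _, max_le hab.le (min_le_left _ _)⟩
    have hπeq : ∀ s ∈ Set.Icc a' b', π s = s := by
      intro s hs
      show max a' (min b' s) = s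
      rw [min_eq_right hs.2, max_eq_right hs.1]
    obtain ⟨C, hC⟩ := (isCompact_Icc (a := a') (b := b')).exists_bound_of_continuousOn
      (f := fun s => fderiv ℝ f (X s)) ((hf.continuous_fderiv one_ne_zero).comp hXc).continuousOn
    have hC0 : 0 ≤ C := le_trans (norm_nonneg _) (hC a' ⟨le_rfl, hab.le⟩)
    set K : NNReal := C.toNNReal with hK
    set V : ℝ → (Fin 2 → ℝ) → (Fin 2 → ℝ) := fun s u => fderiv ℝ f (X (π s)) u with hV
    have hlip : ∀ s, LipschitzWith K (V s) := by
      intro s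
      refine (fderiv ℝ f (X (π s))).lipschitz.weaken ?_
      have h1 : ‖fderiv ℝ f (X (π s))‖ ≤ C := hC _ (hπmem s)
      rw [hK, ← Real.toNNReal_coe (r := ‖fderiv ℝ f (X (π s))‖₊)]
      exact Real.toNNReal_mono h1
    have hcy : Continuous y := continuous_iff_continuousAt.2 fun s => (hy s).continuousAt
    have hcz : Continuous z := continuous_iff_continuousAt.2 fun s => (hz' s).continuousAt
    have hy' : ∀ s ∈ Set.Ioo a' b', HasDerivAt y (V s (y s)) s := by
      intro s hs
      show HasDerivAt y (fderiv ℝ f (X (π s)) (y s)) s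
      rw [hπeq s (Set.Ioo_subset_Icc_self hs), ← hDf]
      exact hy s
    have hzd : ∀ s ∈ Set.Ioo a' b', HasDerivAt z (V s (z s)) s := by
      intro s hs
      show HasDerivAt z (fderiv ℝ f (X (π s)) (z s)) s
      rw [hπeq s (Set.Ioo_subset_Icc_self hs), ← hDf]
      exact hz' s
    have h0 : (0:ℝ) ∈ Set.Ioo a' b' := by
      constructor
      · have := min_le_left 0 t₁; simp only [ha']; linarith
      · have := le_max_left 0 t₁; simp only [hb']; linarith
    have ht₁ : t₁ ∈ Set.Icc a' b' := by
      constructor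
      · have := min_le_right 0 t₁; simp only [ha']; linarith
      · have := le_max_right 0 t₁; simp only [hb']; linarith
    exact ODE_solution_unique_of_mem_Icc (s := fun _ => Set.univ)
      (fun s _ => (hlip s).lipschitzOnWith) h0 hcy.continuousOn hy'
      (fun _ _ => trivial) hcz.continuousOn hzd (fun _ _ => trivial) hz0.symm ht₁
  intro t
  rw [hyz (t + τ), hyz t, hzdef]
  simp only [hvper t, hwper t]
end
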